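/- For every integer N with 1 ≤ N ≤ 16, there does not exist a finite set S of rational numbers with |S| = 2N + 1, closed under negation (x ∈ S implies −x ∈ S), and satisfying Σ_{x∈S} x² = (2N+1)/2 and Σ_{x∈S} x⁴ = 3(2N+1)/8. -/
import Mathlib

private lemma odd_sq_dvd (m : ℤ) (h : Odd m) : 8 ∣ m ^ 2 - 1 := by
  obtain ⟨k, rfl⟩ := h
  obtain ⟨j, hj⟩ := Int.even_mul_succ_self k
  exact ⟨j, by linear_combination 4 * hj⟩

private lemma odd_pow4_dvd (m : ℤ) (h : Odd m) : 16 ∣ m ^ 4 - 1 := by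
  obtain ⟨a, ha⟩ := odd_sq_dvd m h
  obtain ⟨k, rfl⟩ := h
  exact ⟨a * (2*k^2 + 2*k + 1), by linear_combination ((2*k+1)^2+1) * ha⟩

private lemma even_sq_dvd (m : ℤ) (h : ¬ Odd m) : 4 ∣ m ^ 2 := by
  rw [Int.not_odd_iff_even] at h; obtain ⟨k, rfl⟩ := h; exact ⟨k^2, by ring⟩

private lemma even_pow4_dvd (m : ℤ) (h : ¬ Odd m) : 16 ∣ m ^ 4 := by
  rw [Int.not_odd_iff_even] at h; obtain ⟨k, rfl⟩ := h; exact ⟨k^4, by ring⟩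

private lemma dvd_sum_sub_card (n : ℤ) (F : Finset ℚ) (f : ℚ → ℤ)
    (h : ∀ x ∈ F, n ∣ f x - 1) : n ∣ (∑ x ∈ F, f x) - F.card := by
  have e : (∑ x ∈ F, f x) - (F.card : ℤ) = ∑ x ∈ F, (f x - 1) := by
    rw [Finset.sum_sub_distrib, Finset.sum_const, nsmul_eq_mul, mul_one]
  rw [e]; exact Finset.dvd_sum h

private lemma key : ∀ q : ℕ, ∀ (T : Finset ℚ) (p : ℚ → ℤ) (A : ℤ), 0 < q → Odd A →
    T.card ≤ 16 → (∑ x ∈ T, p x ^ 2) = A * (q : ℤ) ^ 2 →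
    (∑ x ∈ T, p x ^ 4) = 3 * A * (q : ℤ) ^ 4 → False := by
  intro q
  induction q using Nat.strong_induction_on with
  | _ q IH =>
  intro T p A hq hA hcard h2 h4
  classical
  set Od := T.filter (fun x => Odd (p x)) with hOd
  set Ev := T.filter (fun x => ¬ Odd (p x)) with hEv
  have hOdsub : Od ⊆ T := Finset.filter_subset _ _
  have hrcard : Od.card ≤ T.card := Finset.card_le_card hOdsub
  have hsplit2 : (∑ x ∈ T, p x ^ 2) = (∑ x ∈ Od, p x ^ 2) + ∑ x ∈ Ev, p x ^ 2 :=
    (Finset.sum_filter_add_sum_filter_not T _ _).symm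
  have hsplit4 : (∑ x ∈ T, p x ^ 4) = (∑ x ∈ Od, p x ^ 4) + ∑ x ∈ Ev, p x ^ 4 :=
    (Finset.sum_filter_add_sum_filter_not T _ _).symm
  have hmemOd : ∀ x ∈ Od, Odd (p x) := fun x hx => (Finset.mem_filter.mp hx).2
  have hmemEv : ∀ x ∈ Ev, ¬ Odd (p x) := fun x hx => (Finset.mem_filter.mp hx).2
  have d1 : (8 : ℤ) ∣ (∑ x ∈ Od, p x ^ 2) - Od.card :=
    dvd_sum_sub_card 8 Od _ (fun x hx => odd_sq_dvd _ (hmemOd x hx))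
  have d2 : (4 : ℤ) ∣ ∑ x ∈ Ev, p x ^ 2 :=
    Finset.dvd_sum (fun x hx => even_sq_dvd _ (hmemEv x hx))
  have d3 : (16 : ℤ) ∣ (∑ x ∈ Od, p x ^ 4) - Od.card :=
    dvd_sum_sub_card 16 Od _ (fun x hx => odd_pow4_dvd _ (hmemOd x hx))
  have d4 : (16 : ℤ) ∣ ∑ x ∈ Ev, p x ^ 4 :=
    Finset.dvd_sum (fun x hx => even_pow4_dvd _ (hmemEv x hx))
  rcases Nat.even_or_odd q with hqe | hqo
  · -- q even : descent or r = 16 case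
    obtain ⟨m, hm⟩ := hqe
    have hmq : m < q := by omega
    have hm0 : 0 < m := by omega
    have hqz : (q : ℤ) = 2 * m := by push_cast [hm]; ring
    -- 16 ∣ r
    have h16r : (16 : ℤ) ∣ (Od.card : ℤ) := by
      have h4' : (∑ x ∈ T, p x ^ 4) = 48 * (A * (m:ℤ)^4) := by
        rw [h4, hqz]; ring
      rw [hsplit4] at h4'
      omega
    have hrle : (Od.card : ℤ) ≤ 16 := by exact_mod_cast le_trans hrcard hcard
    have hr0 : (Od.card : ℤ) = 0 ∨ (Od.card : ℤ) = 16 := by omega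
    rcases hr0 with hr | hr
    · -- all even : descend
      have hOdempty : Od = ∅ := Finset.card_eq_zero.mp (by exact_mod_cast hr)
      have heven : ∀ x ∈ T, (2:ℤ) ∣ p x := by
        intro x hx
        by_contra hcon
        have hnotodd : ¬ (x ∈ Od) := by simp [hOdempty]
        rcases Int.even_or_odd (p x) with h | h
        · exact hcon h.two_dvd
        · exact hnotodd (Finset.mem_filter.mpr ⟨hx, h⟩)
      set p' : ℚ → ℤ := fun x => p x / 2 with hp'
      have hpp : ∀ x ∈ T, p x = 2 * p' x := fun x hx =>
        (Int.mul_ediv_cancel' (heven x hx)).symm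
      have e2 : (∑ x ∈ T, p' x ^ 2) * 4 = (A * (m:ℤ)^2) * 4 := by
        have : (∑ x ∈ T, p x ^ 2) = ∑ x ∈ T, p' x ^ 2 * 4 := by
          refine Finset.sum_congr rfl (fun x hx => ?_)
          rw [hpp x hx]; ring
        rw [this, ← Finset.sum_mul] at h2
        rw [Finset.sum_mul] at h2 ⊢
        rw [h2, hqz]; ring
      have e4 : (∑ x ∈ T, p' x ^ 4) * 16 = (3 * A * (m:ℤ)^4) * 16 := by
        have : (∑ x ∈ T, p x ^ 4) = ∑ x ∈ T, p' x ^ 4 * 16 := by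
          refine Finset.sum_congr rfl (fun x hx => ?_)
          rw [hpp x hx]; ring
        rw [this] at h4
        rw [← Finset.sum_mul] at h4
        rw [h4, hqz]; ring
      exact IH m hmq T p' A hm0 hA hcard
        (by linarith [mul_right_cancel₀ (by norm_num : (4:ℤ) ≠ 0) e2])
        (by linarith [mul_right_cancel₀ (by norm_num : (16:ℤ) ≠ 0) e4])
    · -- all 16 odd
      have hrcard16 : Od.card = 16 := by exact_mod_cast hr
      have hOdT : Od = T := Finset.eq_of_subset_of_card_le hOdsub (by omega)
      have hTcard : T.card = 16 := by omega
      have hodd : ∀ x ∈ T, Odd (p x) := by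
        intro x hx; exact hmemOd x (hOdT ▸ hx)
      set t : ℚ → ℤ := fun x => (p x ^ 2 - 1) / 8 with htdef
      have ht : ∀ x ∈ T, p x ^ 2 = 8 * t x + 1 := by
        intro x hx
        have h8 := Int.mul_ediv_cancel' (odd_sq_dvd _ (hodd x hx))
        simp only [htdef]
        omega
      set s := ∑ x ∈ T, t x with hs
      set u := ∑ x ∈ T, t x ^ 2 with hu
      have e1 : 16 + 8 * s = 4 * (A * (m:ℤ)^2) := by
        have : (∑ x ∈ T, p x ^ 2) = ∑ x ∈ T, (8 * t x + 1) :=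
          Finset.sum_congr rfl ht
        rw [this, Finset.sum_add_distrib, Finset.sum_const, hTcard, ← Finset.mul_sum] at h2
        rw [hqz] at h2
        push_cast [nsmul_eq_mul] at h2
        linear_combination h2
      have e2 : 16 + 16 * s + 64 * u = 48 * (A * (m:ℤ)^4) := by
        have : (∑ x ∈ T, p x ^ 4) = ∑ x ∈ T, (64 * t x ^ 2 + 16 * t x + 1) := by
          refine Finset.sum_congr rfl (fun x hx => ?_)
          have := ht x hx
          have e : p x ^ 4 = (p x ^ 2) ^ 2 := by ring
          rw [e, this]; ring
        rw [this] at h4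
        simp only [Finset.sum_add_distrib, Finset.sum_const, hTcard, ← Finset.mul_sum] at h4
        rw [hqz] at h4
        push_cast [nsmul_eq_mul] at h4
        linear_combination h4
      -- m must be even
      have hMeven : Even ((m:ℤ)) := by
        have hAm : Even (A * (m:ℤ)^2) := ⟨2 + s, by linarith⟩
        have hnotA : ¬ Even A := Int.not_even_iff_odd.mpr hA
        rcases Int.even_mul.mp hAm with h | h
        · exact absurd h hnotA
        · exact (Int.even_pow.mp h).1
      obtain ⟨K, hK⟩ := hMeven
      have e1' : 16 + 8 * s = 16 * (A * K^2) := by rw [hK] at e1; linear_combination e1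
      have e2' : 16 + 16 * s + 64 * u = 768 * (A * K^4) := by rw [hK] at e2; linear_combination e2
      have hX : ∃ X : ℤ, 16 + 8 * s = 16 * X := ⟨A * K^2, e1'⟩
      have hY : ∃ Y : ℤ, 16 + 16 * s + 64 * u = 768 * Y := ⟨A * K^4, e2'⟩
      obtain ⟨X, hX⟩ := hX
      obtain ⟨Y, hY⟩ := hY
      omega
  · -- q odd
    have hqoz : Odd ((q:ℤ)) := by exact_mod_cast hqo
    have hv : (8:ℤ) ∣ (q:ℤ)^2 - 1 := odd_sq_dvd _ hqoz
    obtain ⟨e, he⟩ := hv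
    obtain ⟨w, hw⟩ := hA.mul (hqoz.pow (n := 2))
    -- u = A q^2 = 2w+1
    have h4' : (∑ x ∈ T, p x ^ 4) = 24 * ((A * (q:ℤ)^2) * e) + 3 * (A * (q:ℤ)^2) := by
      rw [h4]
      have : (q:ℤ)^2 = 8 * e + 1 := by linarith
      rw [show (q:ℤ)^4 = (q:ℤ)^2 * (q:ℤ)^2 by ring, this]
      ring
    set U := A * (q:ℤ)^2 with hU
    set F := U * e with hF
    rw [hsplit2] at h2
    rw [hsplit4] at h4'
    -- h2 : a + b = U (with U = 2w+1), h4' : a4 + b4 = 24F + 3U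
    omega

/-- Theorem 7.1: for `1 ≤ N ≤ 16` there is no antipodal 5-design with `2N+1` rational
points for the Chebyshev measure. -/
theorem stmt_17 (N : ℕ) (hN1 : 1 ≤ N) (hN16 : N ≤ 16) :
    ¬ ∃ S : Finset ℚ, S.card = 2 * N + 1 ∧ (∀ x ∈ S, -x ∈ S) ∧
      ∑ x ∈ S, x ^ 2 = (2 * N + 1 : ℚ) / 2 ∧
      ∑ x ∈ S, x ^ 4 = 3 * (2 * N + 1 : ℚ) / 8 := by
  rintro ⟨S, hcard, hneg, hs2, hs4⟩
  classical
  set T := S.filter (fun x => 0 < x) with hT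
  set Tn := T.image (fun x => -x) with hTn
  have hTsub : T ⊆ S := Finset.filter_subset _ _
  have hTpos : ∀ x ∈ T, 0 < x := fun x hx => (Finset.mem_filter.mp hx).2
  have hTnsub : Tn ⊆ S := by
    intro x hx
    simp only [hTn, Finset.mem_image] at hx
    obtain ⟨y, hy, rfl⟩ := hx
    exact hneg y (hTsub hy)
  have hdisj : Disjoint T Tn := by
    rw [Finset.disjoint_left]
    intro x hxT hxTn
    simp only [hTn, Finset.mem_image] at hxTn
    obtain ⟨y, hy, rfl⟩ := hxTn
    linarith [hTpos _ hxT, hTpos y hy]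
  have hcardTn : Tn.card = T.card :=
    Finset.card_image_of_injOn (fun a _ b _ h => neg_injective h)
  have hUsub : T ∪ Tn ⊆ S := Finset.union_subset hTsub hTnsub
  have hcardT : T.card ≤ 16 := by
    have h := Finset.card_le_card hUsub
    rw [Finset.card_union_of_disjoint hdisj, hcardTn, hcard] at h
    omega
  -- even power sums over S are twice those over T
  have hsum : ∀ n : ℕ, 0 < n → (∑ x ∈ S, x ^ (2 * n)) = 2 * ∑ x ∈ T, x ^ (2 * n) := by
    intro n hn
    have h0 : ∀ x ∈ S \ (T ∪ Tn), x ^ (2 * n) = 0 := by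
      intro x hx
      rw [Finset.mem_sdiff, Finset.mem_union] at hx
      obtain ⟨hxS, hxU⟩ := hx
      have hx0 : x = 0 := by
        rcases lt_trichotomy x 0 with h | h | h
        · exfalso
          apply hxU
          right
          simp only [hTn, Finset.mem_image]
          exact ⟨-x, Finset.mem_filter.mpr ⟨hneg x hxS, by linarith⟩, by ring⟩
        · exact h
        · exact absurd (Or.inl (Finset.mem_filter.mpr ⟨hxS, h⟩)) hxU
      rw [hx0]
      exact zero_pow (by omega)
    have e1 : (∑ x ∈ S, x ^ (2 * n)) = ∑ x ∈ T ∪ Tn, x ^ (2 * n) := by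
      rw [← Finset.sum_sdiff hUsub, Finset.sum_eq_zero h0, zero_add]
    rw [e1, Finset.sum_union hdisj, hTn,
      Finset.sum_image (fun a _ b _ h => neg_injective h)]
    have e2 : ∀ x ∈ T, (-x) ^ (2 * n) = x ^ (2 * n) := fun x _ =>
      Even.neg_pow (even_two_mul n) x
    rw [Finset.sum_congr rfl e2]
    ring
  have hT2 : (∑ x ∈ T, x ^ 2) = (2 * N + 1 : ℚ) / 4 := by
    have := hsum 1 one_pos
    norm_num at this
    rw [this] at hs2
    linarith
  have hT4 : (∑ x ∈ T, x ^ 4) = 3 * (2 * N + 1 : ℚ) / 16 := by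
    have := hsum 2 two_pos
    norm_num at this
    rw [this] at hs4
    linarith
  -- clear denominators
  set D : ℕ := ∏ x ∈ T, x.den with hD
  have hDpos : 0 < D := by
    apply Nat.pos_of_ne_zero
    rw [hD, Finset.prod_ne_zero_iff]
    exact fun x _ => x.den_nz
  have hInt : ∀ x ∈ T, ∃ m : ℤ, (x : ℚ) * (D : ℚ) = (m : ℚ) := by
    intro x hx
    obtain ⟨c, hc⟩ := Finset.dvd_prod_of_mem (fun y : ℚ => y.den) hx
    refine ⟨x.num * c, ?_⟩
    rw [hD, hc]
    push_cast
    rw [show ((x.den : ℚ) * c) = (x.den : ℚ) * c from rfl, ← mul_assoc,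
      Rat.mul_den_eq_num]
  set p : ℚ → ℤ := fun x => 2 * (x * (D : ℚ)).num with hp
  have hpx : ∀ x ∈ T, ((p x : ℤ) : ℚ) = 2 * (x * (D : ℚ)) := by
    intro x hx
    obtain ⟨m, hm⟩ := hInt x hx
    rw [hp]
    push_cast
    rw [hm, Rat.num_intCast]
  have hq2 : (∑ x ∈ T, ((p x : ℤ) : ℚ) ^ 2) = ((2 * N + 1 : ℤ) : ℚ) * (D : ℚ) ^ 2 := by
    have e : ∀ x ∈ T, ((p x : ℤ) : ℚ) ^ 2 = x ^ 2 * (4 * (D : ℚ) ^ 2) := by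
      intro x hx
      rw [hpx x hx]
      ring
    rw [Finset.sum_congr rfl e, ← Finset.sum_mul, hT2]
    push_cast
    ring
  have hq4 : (∑ x ∈ T, ((p x : ℤ) : ℚ) ^ 4)
      = 3 * ((2 * N + 1 : ℤ) : ℚ) * (D : ℚ) ^ 4 := by
    have e : ∀ x ∈ T, ((p x : ℤ) : ℚ) ^ 4 = x ^ 4 * (16 * (D : ℚ) ^ 4) := by
      intro x hx
      rw [hpx x hx]
      ring
    rw [Finset.sum_congr rfl e, ← Finset.sum_mul, hT4]
    push_cast
    ring
  have h2int : (∑ x ∈ T, p x ^ 2) = (2 * (N : ℤ) + 1) * (D : ℤ) ^ 2 := by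
    exact_mod_cast hq2
  have h4int : (∑ x ∈ T, p x ^ 4) = 3 * (2 * (N : ℤ) + 1) * (D : ℤ) ^ 4 := by
    exact_mod_cast hq4
  exact key D T p (2 * (N : ℤ) + 1) hDpos ⟨N, by ring⟩ hcardT h2int h4int
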